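/- Let d ≥ 1 and let p, q ∈ [0,1)^d be two distinct points. Set D = 2⌈d/2⌉ and, for i = 0, …, D, let v_i = (i/(D+1), …, i/(D+1)) ∈ ℝ^d. Then there exist an index i ∈ {0, …, D}, an integer ℓ ≥ 0, and integers k₁, …, k_d with 0 ≤ k_j < 2^ℓ, such that both p + v_i and q + v_i lie in the dyadic cell ∏_{j=1}^d [k_j · 2^{1−ℓ}, (k_j + 1) · 2^{1−ℓ}) ⊆ [0,2)^d, and this cell has side length 2^{1−ℓ} ≤ 2(D+1) · ‖p − q‖, where ‖·‖ is the Euclidean norm. -/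

import Mathlib

/-- The half-open unit cube `[0,1)^d` in `ℝ^d` (with the Euclidean norm). -/
def unitCube (d : ℕ) : Set (EuclideanSpace ℝ (Fin d)) :=
  {x | ∀ i, x i ∈ Set.Ico (0 : ℝ) 1}

private lemma euclid_coord_abs_le {d : ℕ} (x : EuclideanSpace ℝ (Fin d)) (j : Fin d) :
    |x j| ≤ ‖x‖ := by
  rw [EuclideanSpace.norm_eq]
  calc |x j| = Real.sqrt (‖x j‖ ^ 2) := by
        rw [Real.sqrt_sq (norm_nonneg _), Real.norm_eq_abs]
    _ ≤ _ := Real.sqrt_le_sqrt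
        (Finset.single_le_sum (fun i _ => sq_nonneg (‖x i‖)) (Finset.mem_univ j))

private lemma floor_mem_Ico (x c : ℝ) (hc : 0 < c) :
    x ∈ Set.Ico ((⌊x / c⌋ : ℝ) * c) (((⌊x / c⌋ : ℝ) + 1) * c) :=
  ⟨(le_div_iff₀ hc).mp (Int.floor_le _), (div_lt_iff₀ hc).mp (Int.lt_floor_add_one _)⟩

/-- Key counting fact: with `N` odd and level `ℓ ≥ 1`, at most one of the shifts `i/N`,
`0 ≤ i < N`, puts a grid line of the grid of cell size `2^(1-ℓ)` between `a` and `b`,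
provided `(b - a) * N < 2^(1-ℓ)`. -/
private lemma shift_count (N ℓ : ℕ) (hN : Odd N) (hl : 1 ≤ ℓ) (a b : ℝ)
    (hab : a ≤ b) (h : (b - a) * N < 2 ^ (1 - (ℓ : ℤ)))
    (i₁ i₂ : ℕ) (h₁ : i₁ < N) (h₂ : i₂ < N)
    (hb₁ : ⌊(a + i₁ / N) / 2 ^ (1 - (ℓ : ℤ))⌋ ≠ ⌊(b + i₁ / N) / 2 ^ (1 - (ℓ : ℤ))⌋)
    (hb₂ : ⌊(a + i₂ / N) / 2 ^ (1 - (ℓ : ℤ))⌋ ≠ ⌊(b + i₂ / N) / 2 ^ (1 - (ℓ : ℤ))⌋) :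
    i₁ = i₂ := by
  set c : ℝ := 2 ^ (1 - (ℓ : ℤ)) with hcdef
  have hcpos : (0 : ℝ) < c := by rw [hcdef]; positivity
  have hNpos : 0 < N := by
    rcases Nat.eq_zero_or_pos N with h0 | h0
    · exact absurd (h0 ▸ hN) (by decide)
    · exact h0
  have hNR : (0 : ℝ) < (N : ℝ) := by exact_mod_cast hNpos
  have key : ∀ i : ℕ, ⌊(a + i / N) / c⌋ ≠ ⌊(b + i / N) / c⌋ →
      ∃ m : ℤ, (m : ℝ) * c - b ≤ i / N ∧ (i : ℝ) / N < m * c - a := by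
    intro i hi
    have hmono : ⌊(a + i / N) / c⌋ ≤ ⌊(b + i / N) / c⌋ :=
      Int.floor_le_floor (by gcongr)
    have hlt : ⌊(a + i / N) / c⌋ < ⌊(b + i / N) / c⌋ := lt_of_le_of_ne hmono hi
    refine ⟨⌊(b + i / N) / c⌋, ?_, ?_⟩
    · have h1 := (le_div_iff₀ hcpos).mp (Int.floor_le ((b + i / N) / c))
      linarith
    · have h2 : (a + i / N) / c < (⌊(b + i / N) / c⌋ : ℝ) := Int.floor_lt.mp hlt
      have h3 := (div_lt_iff₀ hcpos).mp h2
      linarith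
  obtain ⟨m₁, hm₁l, hm₁r⟩ := key i₁ hb₁
  obtain ⟨m₂, hm₂l, hm₂r⟩ := key i₂ hb₂
  -- the integer T = (i₁ - i₂) 2^{ℓ-1} - (m₁ - m₂) N has |T| < 1, hence T = 0
  have hepos : (0 : ℝ) < (2 : ℝ) ^ ((ℓ : ℤ) - 1) := by positivity
  have hec : (2 : ℝ) ^ ((ℓ : ℤ) - 1) * c = 1 := by
    rw [hcdef, ← zpow_add₀ (two_ne_zero : (2 : ℝ) ≠ 0)]
    norm_num
  have hcast : (((2 : ℤ) ^ (ℓ - 1) : ℤ) : ℝ) = (2 : ℝ) ^ ((ℓ : ℤ) - 1) := by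
    push_cast
    rw [← zpow_natCast (2 : ℝ) (ℓ - 1)]
    congr 1
    omega
  have key2 : ∀ (i : ℕ) (m : ℤ), (N : ℝ) * (2 : ℝ) ^ ((ℓ : ℤ) - 1) * ((i : ℝ) / N - m * c)
      = (i : ℝ) * (2 : ℝ) ^ ((ℓ : ℤ) - 1) - (m : ℝ) * N := by
    intro i m
    have hid : (N : ℝ) * ((i : ℝ) / N) = (i : ℝ) := by
      field_simp
    calc (N : ℝ) * (2 : ℝ) ^ ((ℓ : ℤ) - 1) * ((i : ℝ) / N - m * c)
        = (2 : ℝ) ^ ((ℓ : ℤ) - 1) * ((N : ℝ) * ((i : ℝ) / N))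
          - ((m : ℝ) * N) * ((2 : ℝ) ^ ((ℓ : ℤ) - 1) * c) := by ring
      _ = (i : ℝ) * (2 : ℝ) ^ ((ℓ : ℤ) - 1) - (m : ℝ) * N := by
          rw [hid, hec]; ring
  have hTr : ((((i₁ : ℤ) - i₂) * 2 ^ (ℓ - 1) - (m₁ - m₂) * N : ℤ) : ℝ)
      = ((N : ℝ) * (2 : ℝ) ^ ((ℓ : ℤ) - 1)) *
        (((i₁ : ℝ) / N - m₁ * c) - ((i₂ : ℝ) / N - m₂ * c)) := by
    push_cast [hcast]
    linear_combination (key2 i₂ m₂) - (key2 i₁ m₁)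
  have habs : |((((i₁ : ℤ) - i₂) * 2 ^ (ℓ - 1) - (m₁ - m₂) * N : ℤ) : ℝ)| < 1 := by
    rw [hTr, abs_mul]
    have h1 : |(N : ℝ) * (2 : ℝ) ^ ((ℓ : ℤ) - 1)| = (N : ℝ) * (2 : ℝ) ^ ((ℓ : ℤ) - 1) :=
      abs_of_pos (by positivity)
    have h2 : |(((i₁ : ℝ) / N - m₁ * c) - ((i₂ : ℝ) / N - m₂ * c))| < b - a := by
      rw [abs_lt]; constructor <;> linarith
    calc |(N : ℝ) * (2 : ℝ) ^ ((ℓ : ℤ) - 1)| *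
          |(((i₁ : ℝ) / N - m₁ * c) - ((i₂ : ℝ) / N - m₂ * c))|
        < ((N : ℝ) * (2 : ℝ) ^ ((ℓ : ℤ) - 1)) * (b - a) := by
          rw [h1]
          exact mul_lt_mul_of_pos_left h2 (by positivity)
      _ = ((b - a) * N) * (2 : ℝ) ^ ((ℓ : ℤ) - 1) := by ring
      _ < c * (2 : ℝ) ^ ((ℓ : ℤ) - 1) := by
          exact mul_lt_mul_of_pos_right h hepos
      _ = 1 := by rw [mul_comm]; exact hec
  have hT0 : ((i₁ : ℤ) - i₂) * 2 ^ (ℓ - 1) - (m₁ - m₂) * N = 0 := by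
    have h' := abs_lt.mp habs
    have hl' : (-1 : ℤ) < ((i₁ : ℤ) - i₂) * 2 ^ (ℓ - 1) - (m₁ - m₂) * N := by
      exact_mod_cast h'.1
    have hr' : ((i₁ : ℤ) - i₂) * 2 ^ (ℓ - 1) - (m₁ - m₂) * N < 1 := by
      exact_mod_cast h'.2
    omega
  have heq : ((i₁ : ℤ) - i₂) * 2 ^ (ℓ - 1) = (m₁ - m₂) * N := by omega
  have hcop : IsCoprime ((N : ℤ)) ((2 : ℤ) ^ (ℓ - 1)) := by
    have hc1 : Nat.Coprime N (2 ^ (ℓ - 1)) :=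
      Nat.Coprime.pow_right _ (Nat.coprime_two_right.mpr hN)
    have hc2 := Nat.isCoprime_iff_coprime.mpr hc1
    push_cast at hc2
    exact hc2
  have hdvd : (N : ℤ) ∣ ((i₁ : ℤ) - i₂) :=
    hcop.dvd_of_dvd_mul_right ⟨m₁ - m₂, by rw [heq]; ring⟩
  have hzero : (i₁ : ℤ) - i₂ = 0 := by
    refine Int.eq_zero_of_abs_lt_dvd hdvd (abs_lt.mpr ⟨?_, ?_⟩) <;> omega
  omega

/-- shifting lemma. For any two distinct points `p, q ∈ [0,1)^d`, one of the
`D+1` diagonal shifts `v_i = (i/(D+1), …, i/(D+1))`, `D = 2⌈d/2⌉`, places both points in a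
common dyadic cell of `[0,2)^d` of side length at most `2(D+1)‖p − q‖`. -/
theorem shifting_lemma (d : ℕ) (hd : 1 ≤ d)
    (p q : EuclideanSpace ℝ (Fin d)) (hp : p ∈ unitCube d) (hq : q ∈ unitCube d)
    (hpq : p ≠ q) :
    ∃ (i : ℕ), i ≤ 2 * ((d + 1) / 2) ∧
      ∃ (ℓ : ℕ) (k : Fin d → ℕ),
        (∀ j, k j < 2 ^ ℓ) ∧
        (∀ j, p j + (i : ℝ) / (2 * ((d + 1) / 2 : ℕ) + 1) ∈
            Set.Ico ((k j : ℝ) * 2 ^ (1 - (ℓ : ℤ))) (((k j : ℝ) + 1) * 2 ^ (1 - (ℓ : ℤ)))) ∧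
        (∀ j, q j + (i : ℝ) / (2 * ((d + 1) / 2 : ℕ) + 1) ∈
            Set.Ico ((k j : ℝ) * 2 ^ (1 - (ℓ : ℤ))) (((k j : ℝ) + 1) * 2 ^ (1 - (ℓ : ℤ)))) ∧
        (2 : ℝ) ^ (1 - (ℓ : ℤ)) ≤ 2 * (2 * ((d + 1) / 2 : ℕ) + 1) * ‖p - q‖ := by
  have hε : (0 : ℝ) < ‖p - q‖ := by
    rw [norm_pos_iff]
    exact sub_ne_zero.mpr hpq
  set N : ℕ := 2 * ((d + 1) / 2) + 1 with hNdef
  have hNodd : Odd N := ⟨(d + 1) / 2, by omega⟩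
  have hdN : d < N := by omega
  have hNpos : 0 < N := by omega
  have hNR : (0 : ℝ) < (N : ℝ) := by exact_mod_cast hNpos
  have hden : (2 * (((d + 1) / 2 : ℕ) : ℝ) + 1) = (N : ℝ) := by
    rw [hNdef]; push_cast; ring
  simp only [hden]
  have hcoord : ∀ j, |p j - q j| ≤ ‖p - q‖ := by
    intro j
    have h1 := euclid_coord_abs_le (p - q) j
    simpa using h1
  by_cases hbig : 1 ≤ (N : ℝ) * ‖p - q‖
  · -- big distance: ℓ = 0, single cell [0,2)^d
    refine ⟨0, by omega, 0, fun _ => 0, fun j => Nat.one_pos, ?_, ?_, ?_⟩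
    · intro j
      have h1 := hp j
      norm_num [Set.mem_Ico]
      exact ⟨h1.1, by linarith [h1.2]⟩
    · intro j
      have h1 := hq j
      norm_num [Set.mem_Ico]
      exact ⟨h1.1, by linarith [h1.2]⟩
    · norm_num
      nlinarith
  · push_neg at hbig
    obtain ⟨n, hn1, hn2⟩ := exists_mem_Ico_zpow (mul_pos hNR hε) (one_lt_two (α := ℝ))
    have hnneg : n < 0 := by
      by_contra hc
      push_neg at hc
      have : (1 : ℝ) ≤ (2 : ℝ) ^ n := one_le_zpow₀ one_le_two hc
      linarith
    set ℓ : ℕ := (-n).toNat with hℓdef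
    have hℓ1 : 1 ≤ ℓ := by omega
    have hℓn : 1 - (ℓ : ℤ) = n + 1 := by omega
    have hc_eq : (2 : ℝ) ^ (1 - (ℓ : ℤ)) = 2 ^ (n + 1) := by rw [hℓn]
    have hcbound : (N : ℝ) * ‖p - q‖ < 2 ^ (1 - (ℓ : ℤ)) := by rw [hc_eq]; exact hn2
    have hckey : (2 : ℝ) ^ (1 - (ℓ : ℤ)) ≤ 2 * ((N : ℝ) * ‖p - q‖) := by
      rw [hc_eq, zpow_add_one₀ (two_ne_zero : (2 : ℝ) ≠ 0)]
      nlinarith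
    have hcpos : (0 : ℝ) < 2 ^ (1 - (ℓ : ℤ)) := by positivity
    -- bad shift indices per coordinate
    set Bj : Fin d → Finset ℕ := fun j => (Finset.range N).filter
        (fun i => ⌊(p j ⊓ q j + i / N) / 2 ^ (1 - (ℓ : ℤ))⌋ ≠
          ⌊(p j ⊔ q j + i / N) / 2 ^ (1 - (ℓ : ℤ))⌋) with hBjdef
    have hBj : ∀ j, (Bj j).card ≤ 1 := by
      intro j
      refine Finset.card_le_one.mpr ?_
      intro i₁ hi₁ i₂ hi₂
      simp only [hBjdef, Finset.mem_filter, Finset.mem_range] at hi₁ hi₂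
      refine shift_count N ℓ hNodd hℓ1 _ _ inf_le_sup ?_ i₁ i₂ hi₁.1 hi₂.1 hi₁.2 hi₂.2
      have h1 : p j ⊔ q j - p j ⊓ q j = |p j - q j| := by
        rw [max_sub_min_eq_abs, abs_sub_comm]
      rw [h1]
      calc |p j - q j| * N ≤ ‖p - q‖ * N :=
            mul_le_mul_of_nonneg_right (hcoord j) hNR.le
        _ = (N : ℝ) * ‖p - q‖ := by ring
        _ < 2 ^ (1 - (ℓ : ℤ)) := hcbound
    have hex : ∃ i < N, ∀ j, ⌊(p j + i / N) / 2 ^ (1 - (ℓ : ℤ))⌋ =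
        ⌊(q j + i / N) / 2 ^ (1 - (ℓ : ℤ))⌋ := by
      have hsub : Finset.univ.biUnion Bj ⊆ Finset.range N := by
        refine Finset.biUnion_subset.mpr fun j _ => ?_
        rw [hBjdef]
        exact Finset.filter_subset _ _
      have hcard : (Finset.univ.biUnion Bj).card ≤ d := by
        calc (Finset.univ.biUnion Bj).card ≤ ∑ j, (Bj j).card := Finset.card_biUnion_le
          _ ≤ ∑ _j : Fin d, 1 := Finset.sum_le_sum fun j _ => hBj j
          _ = d := by simp
      have hne : (Finset.range N \ Finset.univ.biUnion Bj).Nonempty := by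
        rw [← Finset.card_pos, Finset.card_sdiff, Finset.inter_eq_left.mpr hsub, Finset.card_range]
        omega
      obtain ⟨i, hi⟩ := hne
      rw [Finset.mem_sdiff, Finset.mem_range] at hi
      refine ⟨i, hi.1, fun j => ?_⟩
      by_contra hne'
      apply hi.2
      refine Finset.mem_biUnion.mpr ⟨j, Finset.mem_univ _, ?_⟩
      simp only [hBjdef, Finset.mem_filter, Finset.mem_range]
      refine ⟨hi.1, ?_⟩
      rcases le_total (p j) (q j) with hle | hle
      · rwa [inf_eq_left.mpr hle, sup_eq_right.mpr hle]
      · rw [inf_eq_right.mpr hle, sup_eq_left.mpr hle]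
        exact Ne.symm hne'
    obtain ⟨i, hiN, hifloor⟩ := hex
    have hxfacts : ∀ j : Fin d, 0 ≤ p j + (i : ℝ) / N ∧ p j + (i : ℝ) / N < 2 := by
      intro j
      have h1 := hp j
      have h2 : (i : ℝ) / N < 1 := (div_lt_one hNR).mpr (by exact_mod_cast hiN)
      have h3 : (0 : ℝ) ≤ (i : ℝ) / N := by positivity
      exact ⟨by linarith [h1.1], by linarith [h1.2]⟩
    have hfl : ∀ j : Fin d, 0 ≤ ⌊(p j + (i : ℝ) / N) / 2 ^ (1 - (ℓ : ℤ))⌋ := by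
      intro j
      refine Int.floor_nonneg.mpr (div_nonneg (hxfacts j).1 hcpos.le)
    have hkcast : ∀ j : Fin d,
        (((⌊(p j + (i : ℝ) / N) / 2 ^ (1 - (ℓ : ℤ))⌋).toNat : ℕ) : ℝ)
          = ((⌊(p j + (i : ℝ) / N) / 2 ^ (1 - (ℓ : ℤ))⌋ : ℤ) : ℝ) := by
      intro j
      exact_mod_cast congrArg (Int.cast : ℤ → ℝ) (Int.toNat_of_nonneg (hfl j))
    refine ⟨i, by omega, ℓ,
      fun j => (⌊(p j + (i : ℝ) / N) / 2 ^ (1 - (ℓ : ℤ))⌋).toNat, ?_, ?_, ?_, ?_⟩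
    · intro j
      have hlt2 : ⌊(p j + (i : ℝ) / N) / 2 ^ (1 - (ℓ : ℤ))⌋ < ((2 ^ ℓ : ℕ) : ℤ) := by
        rw [Int.floor_lt]
        rw [div_lt_iff₀ hcpos]
        have h2 : (((2 ^ ℓ : ℕ) : ℤ) : ℝ) * 2 ^ (1 - (ℓ : ℤ)) = 2 := by
          push_cast
          rw [← zpow_natCast (2 : ℝ) ℓ, ← zpow_add₀ (two_ne_zero : (2 : ℝ) ≠ 0)]
          norm_num
        rw [h2]
        exact (hxfacts j).2
      exact (Int.toNat_lt' (Nat.pow_pos (by norm_num : 0 < 2))).mpr hlt2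
    · intro j
      simp only [hkcast j]
      exact floor_mem_Ico _ _ hcpos
    · intro j
      have hkq : (((⌊(p j + (i : ℝ) / N) / 2 ^ (1 - (ℓ : ℤ))⌋).toNat : ℕ) : ℝ)
          = ((⌊(q j + (i : ℝ) / N) / 2 ^ (1 - (ℓ : ℤ))⌋ : ℤ) : ℝ) := by
        rw [hkcast j, hifloor j]
      simp only [hkq]
      exact floor_mem_Ico _ _ hcpos
    · calc (2 : ℝ) ^ (1 - (ℓ : ℤ)) ≤ 2 * ((N : ℝ) * ‖p - q‖) := hckey
        _ = 2 * (N : ℝ) * ‖p - q‖ := by ring
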